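/- arXiv:2203.05305 — 5 statements merged into one kernel-verified Lean document; each statement's English description precedes it below -/
import Mathlib

section
/- Three points x_0, x_1, x_2 in Euclidean space are affinely independent (not collinear) if and only if their Cayley–Menger determinant cm(x_0, x_1, x_2) is strictly negative. -/
noncomputable section

/-- The Cayley–Menger determinant of the points `x 0, …, x (m-1)`. -/
def cayleyMenger {E : Type*} [PseudoMetricSpace E] {m : ℕ} (x : Fin m → E) : ℝ :=
  Matrix.det (Matrix.of fun i j : Option (Fin m) =>
    match i, j with
    | none, none => 0
    | none, some _ => 1
    | some _, none => 1
    | some a, some b => dist (x a) (x b) ^ 2)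

lemma cm_triple {E : Type*} [PseudoMetricSpace E] (x₀ x₁ x₂ : E) :
    cayleyMenger ![x₀, x₁, x₂] =
      Matrix.det !![(0:ℝ),1,1,1;
        1, 0, dist x₀ x₁ ^ 2, dist x₀ x₂ ^ 2;
        1, dist x₀ x₁ ^ 2, 0, dist x₁ x₂ ^ 2;
        1, dist x₀ x₂ ^ 2, dist x₁ x₂ ^ 2, 0] := by
  rw [cayleyMenger, ← Matrix.det_reindex_self (finSuccEquiv 3)]
  congr 1
  ext i j
  rcases i with _ | i <;> rcases j with _ | j <;>
    [skip; fin_cases j; fin_cases i; (fin_cases i <;> fin_cases j)] <;>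
    simp [Matrix.reindex_apply, dist_comm, Fin.ext_iff, Matrix.vecHead, Matrix.vecTail]

lemma det4 (a b c : ℝ) :
    Matrix.det !![(0:ℝ),1,1,1; 1,0,a,b; 1,a,0,c; 1,b,c,0]
      = a^2+b^2+c^2-2*a*b-2*b*c-2*a*c := by
  rw [Matrix.det_succ_row_zero]
  simp [Fin.sum_univ_succ, Matrix.det_fin_three, Fin.succAbove,
    Matrix.submatrix_apply, show (Fin.castSucc 2 : Fin 4) = 2 from rfl]
  ring

lemma cs_pair {E : Type*} [NormedAddCommGroup E] [InnerProductSpace ℝ E] (u v : E) :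
    (inner ℝ u v : ℝ) ^ 2 < ‖u‖ ^ 2 * ‖v‖ ^ 2 ↔ ¬ (u = 0 ∨ ∃ r : ℝ, v = r • u) := by
  have hcs : (inner ℝ u v : ℝ) ^ 2 ≤ ‖u‖ ^ 2 * ‖v‖ ^ 2 := by
    have := real_inner_mul_inner_self_le u v
    rw [real_inner_self_eq_norm_sq, real_inner_self_eq_norm_sq] at this
    nlinarith [this]
  have habs : |(inner ℝ u v : ℝ)| = ‖u‖ * ‖v‖ ↔ (u = 0 ∨ ∃ r : ℝ, v = r • u) := by
    rw [show |(inner ℝ u v : ℝ)| = ‖(inner ℝ u v : ℝ)‖ from (Real.norm_eq_abs _).symm]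
    exact (norm_inner_eq_norm_tfae (𝕜 := ℝ) u v).out 0 2
  constructor
  · intro h hcon
    have h2 := habs.mpr hcon
    have h3 : (inner ℝ u v : ℝ) ^ 2 = ‖u‖ ^ 2 * ‖v‖ ^ 2 := by
      rw [← sq_abs, h2]; ring
    linarith
  · intro h
    rcases lt_or_eq_of_le hcs with h' | h'
    · exact h'
    · exfalso
      apply h
      apply habs.mp
      have hnn : (0:ℝ) ≤ ‖u‖ * ‖v‖ := by positivity
      rw [← sq_eq_sq₀ (abs_nonneg _) hnn, sq_abs]
      nlinarith [h']

lemma collinear_triple {n : ℕ} (x₀ x₁ x₂ : EuclideanSpace ℝ (Fin n)) :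
    Collinear ℝ ({x₀, x₁, x₂} : Set (EuclideanSpace ℝ (Fin n))) ↔
      (x₁ - x₀ = 0 ∨ ∃ r : ℝ, x₂ - x₀ = r • (x₁ - x₀)) := by
  rw [collinear_iff_of_mem (Set.mem_insert x₀ _)]
  constructor
  · rintro ⟨w, hw⟩
    obtain ⟨r₁, hr₁⟩ := hw x₁ (by simp)
    obtain ⟨r₂, hr₂⟩ := hw x₂ (by simp)
    have hu' : x₁ - x₀ = r₁ • w := by rw [hr₁]; simp
    have hv' : x₂ - x₀ = r₂ • w := by rw [hr₂]; simp
    rcases eq_or_ne r₁ 0 with h | h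
    · left; rw [hu', h, zero_smul]
    · right; exact ⟨r₂ / r₁, by rw [hv', hu', smul_smul, div_mul_cancel₀ _ h]⟩
  · rintro (h | ⟨r, h⟩)
    · refine ⟨x₂ - x₀, fun p hp => ?_⟩
      rcases hp with rfl | rfl | rfl
      · exact ⟨0, by simp⟩
      · refine ⟨0, ?_⟩
        rw [sub_eq_zero] at h
        simp [h]
      · exact ⟨1, by simp⟩
    · refine ⟨x₁ - x₀, fun p hp => ?_⟩
      rcases hp with rfl | rfl | rfl
      · exact ⟨0, by simp⟩
      · exact ⟨1, by simp⟩
      · exact ⟨r, by rw [← h]; simp⟩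

theorem affineIndependent_iff_cayleyMenger_neg {n : ℕ}
    (x₀ x₁ x₂ : EuclideanSpace ℝ (Fin n)) :
    AffineIndependent ℝ ![x₀, x₁, x₂] ↔ cayleyMenger ![x₀, x₁, x₂] < 0 := by
  have hcm : cayleyMenger ![x₀, x₁, x₂] =
      4 * ((inner ℝ (x₁ - x₀) (x₂ - x₀) : ℝ) ^ 2 - ‖x₁ - x₀‖ ^ 2 * ‖x₂ - x₀‖ ^ 2) := by
    rw [cm_triple]
    have h1 : dist x₀ x₁ ^ 2 = ‖x₁ - x₀‖ ^ 2 := by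
      rw [dist_eq_norm, ← norm_neg]; congr 1; abel
    have h2 : dist x₀ x₂ ^ 2 = ‖x₂ - x₀‖ ^ 2 := by
      rw [dist_eq_norm, ← norm_neg]; congr 1; abel
    have h3 : dist x₁ x₂ ^ 2 =
        ‖x₁ - x₀‖ ^ 2 - 2 * (inner ℝ (x₁ - x₀) (x₂ - x₀) : ℝ) + ‖x₂ - x₀‖ ^ 2 := by
      have he : x₁ - x₂ = (x₁ - x₀) - (x₂ - x₀) := by abel
      rw [dist_eq_norm, he, @norm_sub_sq_real]
    rw [h1, h2, h3, det4]
    ring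
  rw [affineIndependent_iff_not_collinear_set, collinear_triple, hcm, ← cs_pair]
  constructor <;> intro h <;> nlinarith [h]
end
end

section
/- Four points x_0, x_1, x_2, x_3 in R^3 are affinely independent (not coplanar) if and only if their Cayley–Menger determinant cm(x_0, x_1, x_2, x_3) is strictly positive. -/
set_option maxRecDepth 40000
set_option maxHeartbeats 2000000

noncomputable section

private def cmB (x : Fin 4 → EuclideanSpace ℝ (Fin 3)) :
    Matrix (Option (Fin 4)) (Option (Fin 4)) ℝ :=
  Matrix.of fun i j : Option (Fin 4) =>
    match i, j with
    | none, none => 0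
    | none, some _ => 1
    | some _, none => 1
    | some a, some b => dist (x a) (x b) ^ 2

private lemma cm_eq_B (x : Fin 4 → EuclideanSpace ℝ (Fin 3)) :
    cayleyMenger x = (cmB x).det := rfl

private lemma cm_eq_explicit (x : Fin 4 → EuclideanSpace ℝ (Fin 3)) :
    cayleyMenger x = Matrix.det
      !![0, 1, 1, 1, 1;
         1, 0, dist (x 0) (x 1)^2, dist (x 0) (x 2)^2, dist (x 0) (x 3)^2;
         1, dist (x 0) (x 1)^2, 0, dist (x 1) (x 2)^2, dist (x 1) (x 3)^2;
         1, dist (x 0) (x 2)^2, dist (x 1) (x 2)^2, 0, dist (x 2) (x 3)^2;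
         1, dist (x 0) (x 3)^2, dist (x 1) (x 3)^2, dist (x 2) (x 3)^2, 0] := by
  rw [cm_eq_B, ← Matrix.det_submatrix_equiv_self (finSuccEquiv 4) (cmB x)]
  congr 1
  have e0 : finSuccEquiv 4 0 = none := rfl
  have e1 : finSuccEquiv 4 1 = some 0 := rfl
  have e2 : finSuccEquiv 4 2 = some 1 := rfl
  have e3 : finSuccEquiv 4 3 = some 2 := rfl
  have e4 : finSuccEquiv 4 4 = some 3 := rfl
  ext i j
  fin_cases i <;> fin_cases j <;>
    simp [cmB, e0, e1, e2, e3, e4, dist_self, dist_comm, Matrix.vecHead, Matrix.vecTail]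

private lemma dist_sq_eq (a b : EuclideanSpace ℝ (Fin 3)) :
    dist a b ^ 2 = (a 0 - b 0)^2 + (a 1 - b 1)^2 + (a 2 - b 2)^2 := by
  rw [EuclideanSpace.dist_eq, Real.sq_sqrt (by positivity)]
  simp [Fin.sum_univ_three, Real.dist_eq, sq_abs]
lemma det_fin_four (A : Matrix (Fin 4) (Fin 4) ℝ) :
    A.det =
      A 0 0 * (A 1 1 * (A 2 2 * A 3 3 - A 2 3 * A 3 2) - A 1 2 * (A 2 1 * A 3 3 - A 2 3 * A 3 1) + A 1 3 * (A 2 1 * A 3 2 - A 2 2 * A 3 1))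
    - A 0 1 * (A 1 0 * (A 2 2 * A 3 3 - A 2 3 * A 3 2) - A 1 2 * (A 2 0 * A 3 3 - A 2 3 * A 3 0) + A 1 3 * (A 2 0 * A 3 2 - A 2 2 * A 3 0))
    + A 0 2 * (A 1 0 * (A 2 1 * A 3 3 - A 2 3 * A 3 1) - A 1 1 * (A 2 0 * A 3 3 - A 2 3 * A 3 0) + A 1 3 * (A 2 0 * A 3 1 - A 2 1 * A 3 0))
    - A 0 3 * (A 1 0 * (A 2 1 * A 3 2 - A 2 2 * A 3 1) - A 1 1 * (A 2 0 * A 3 2 - A 2 2 * A 3 0) + A 1 2 * (A 2 0 * A 3 1 - A 2 1 * A 3 0)) := by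
  rw [Matrix.det_succ_row_zero]
  simp only [Fin.sum_univ_succ, Fin.sum_univ_zero, Matrix.det_fin_three,
    Matrix.submatrix_apply, Fin.succ_zero_eq_one, Fin.succ_one_eq_two, Fin.succAbove_zero,
    Function.comp_apply, Fin.isValue]
  norm_num [Fin.succAbove, Fin.lt_def, show (Fin.succ 2 : Fin 4) = 3 from rfl, show (Fin.castSucc 2 : Fin 4) = 2 from rfl, show ((2:Fin 3).succ : Fin 4) = 3 from rfl, show ((3:Fin 4):ℕ) = 3 from rfl, show ((2:Fin 4):ℕ) = 2 from rfl, show ((1:Fin 4):ℕ) = 1 from rfl, Fin.coe_castSucc, Fin.val_zero, Fin.val_one]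
  ring

lemma det_fin_five (A : Matrix (Fin 5) (Fin 5) ℝ) :
    A.det =
      A 0 0 * (A 1 1 * (A 2 2 * (A 3 3 * A 4 4 - A 3 4 * A 4 3) - A 2 3 * (A 3 2 * A 4 4 - A 3 4 * A 4 2) + A 2 4 * (A 3 2 * A 4 3 - A 3 3 * A 4 2)) - A 1 2 * (A 2 1 * (A 3 3 * A 4 4 - A 3 4 * A 4 3) - A 2 3 * (A 3 1 * A 4 4 - A 3 4 * A 4 1) + A 2 4 * (A 3 1 * A 4 3 - A 3 3 * A 4 1)) + A 1 3 * (A 2 1 * (A 3 2 * A 4 4 - A 3 4 * A 4 2) - A 2 2 * (A 3 1 * A 4 4 - A 3 4 * A 4 1) + A 2 4 * (A 3 1 * A 4 2 - A 3 2 * A 4 1)) - A 1 4 * (A 2 1 * (A 3 2 * A 4 3 - A 3 3 * A 4 2) - A 2 2 * (A 3 1 * A 4 3 - A 3 3 * A 4 1) + A 2 3 * (A 3 1 * A 4 2 - A 3 2 * A 4 1)))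
      - A 0 1 * (A 1 0 * (A 2 2 * (A 3 3 * A 4 4 - A 3 4 * A 4 3) - A 2 3 * (A 3 2 * A 4 4 - A 3 4 * A 4 2) + A 2 4 * (A 3 2 * A 4 3 - A 3 3 * A 4 2)) - A 1 2 * (A 2 0 * (A 3 3 * A 4 4 - A 3 4 * A 4 3) - A 2 3 * (A 3 0 * A 4 4 - A 3 4 * A 4 0) + A 2 4 * (A 3 0 * A 4 3 - A 3 3 * A 4 0)) + A 1 3 * (A 2 0 * (A 3 2 * A 4 4 - A 3 4 * A 4 2) - A 2 2 * (A 3 0 * A 4 4 - A 3 4 * A 4 0) + A 2 4 * (A 3 0 * A 4 2 - A 3 2 * A 4 0)) - A 1 4 * (A 2 0 * (A 3 2 * A 4 3 - A 3 3 * A 4 2) - A 2 2 * (A 3 0 * A 4 3 - A 3 3 * A 4 0) + A 2 3 * (A 3 0 * A 4 2 - A 3 2 * A 4 0)))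
      + A 0 2 * (A 1 0 * (A 2 1 * (A 3 3 * A 4 4 - A 3 4 * A 4 3) - A 2 3 * (A 3 1 * A 4 4 - A 3 4 * A 4 1) + A 2 4 * (A 3 1 * A 4 3 - A 3 3 * A 4 1)) - A 1 1 * (A 2 0 * (A 3 3 * A 4 4 - A 3 4 * A 4 3) - A 2 3 * (A 3 0 * A 4 4 - A 3 4 * A 4 0) + A 2 4 * (A 3 0 * A 4 3 - A 3 3 * A 4 0)) + A 1 3 * (A 2 0 * (A 3 1 * A 4 4 - A 3 4 * A 4 1) - A 2 1 * (A 3 0 * A 4 4 - A 3 4 * A 4 0) + A 2 4 * (A 3 0 * A 4 1 - A 3 1 * A 4 0)) - A 1 4 * (A 2 0 * (A 3 1 * A 4 3 - A 3 3 * A 4 1) - A 2 1 * (A 3 0 * A 4 3 - A 3 3 * A 4 0) + A 2 3 * (A 3 0 * A 4 1 - A 3 1 * A 4 0)))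
      - A 0 3 * (A 1 0 * (A 2 1 * (A 3 2 * A 4 4 - A 3 4 * A 4 2) - A 2 2 * (A 3 1 * A 4 4 - A 3 4 * A 4 1) + A 2 4 * (A 3 1 * A 4 2 - A 3 2 * A 4 1)) - A 1 1 * (A 2 0 * (A 3 2 * A 4 4 - A 3 4 * A 4 2) - A 2 2 * (A 3 0 * A 4 4 - A 3 4 * A 4 0) + A 2 4 * (A 3 0 * A 4 2 - A 3 2 * A 4 0)) + A 1 2 * (A 2 0 * (A 3 1 * A 4 4 - A 3 4 * A 4 1) - A 2 1 * (A 3 0 * A 4 4 - A 3 4 * A 4 0) + A 2 4 * (A 3 0 * A 4 1 - A 3 1 * A 4 0)) - A 1 4 * (A 2 0 * (A 3 1 * A 4 2 - A 3 2 * A 4 1) - A 2 1 * (A 3 0 * A 4 2 - A 3 2 * A 4 0) + A 2 2 * (A 3 0 * A 4 1 - A 3 1 * A 4 0)))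
      + A 0 4 * (A 1 0 * (A 2 1 * (A 3 2 * A 4 3 - A 3 3 * A 4 2) - A 2 2 * (A 3 1 * A 4 3 - A 3 3 * A 4 1) + A 2 3 * (A 3 1 * A 4 2 - A 3 2 * A 4 1)) - A 1 1 * (A 2 0 * (A 3 2 * A 4 3 - A 3 3 * A 4 2) - A 2 2 * (A 3 0 * A 4 3 - A 3 3 * A 4 0) + A 2 3 * (A 3 0 * A 4 2 - A 3 2 * A 4 0)) + A 1 2 * (A 2 0 * (A 3 1 * A 4 3 - A 3 3 * A 4 1) - A 2 1 * (A 3 0 * A 4 3 - A 3 3 * A 4 0) + A 2 3 * (A 3 0 * A 4 1 - A 3 1 * A 4 0)) - A 1 3 * (A 2 0 * (A 3 1 * A 4 2 - A 3 2 * A 4 1) - A 2 1 * (A 3 0 * A 4 2 - A 3 2 * A 4 0) + A 2 2 * (A 3 0 * A 4 1 - A 3 1 * A 4 0))) := by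
  rw [Matrix.det_succ_row_zero]
  simp only [Fin.sum_univ_succ, Fin.sum_univ_zero, det_fin_four,
    Matrix.submatrix_apply, Fin.succ_zero_eq_one, Fin.succ_one_eq_two, Fin.succAbove_zero,
    Function.comp_apply, Fin.isValue]
  norm_num [Fin.succAbove, Fin.lt_def, show (Fin.succ 2 : Fin 5) = 3 from rfl,
    show (Fin.succ 3 : Fin 5) = 4 from rfl,
    show (Fin.castSucc 2 : Fin 5) = 2 from rfl, show (Fin.castSucc 3 : Fin 5) = 3 from rfl,
    show ((2:Fin 4).succ : Fin 5) = 3 from rfl, show ((3:Fin 4).succ : Fin 5) = 4 from rfl,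
    show ((4:Fin 5):ℕ) = 4 from rfl,
    show ((3:Fin 5):ℕ) = 3 from rfl, show ((2:Fin 5):ℕ) = 2 from rfl,
    show ((1:Fin 5):ℕ) = 1 from rfl,
    show (Fin.succ (Fin.succ (2:Fin 3)) : Fin 5) = 4 from rfl,
    show (Fin.succ (Fin.succ (1:Fin 3)) : Fin 5) = 3 from rfl,
    show (Fin.succ (Fin.succ (0:Fin 3)) : Fin 5) = 2 from rfl,
    show (Fin.succ (Fin.castSucc (2:Fin 3)) : Fin 5) = 3 from rfl,
    show (Fin.castSucc (Fin.succ (2:Fin 3)) : Fin 5) = 3 from rfl,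
    show (Fin.castSucc (Fin.castSucc (2:Fin 3)) : Fin 5) = 2 from rfl,
    Fin.coe_castSucc, Fin.val_zero, Fin.val_one]
  ring

lemma cm_det5 (u v w p q r : ℝ) :
    Matrix.det !![0,1,1,1,1; 1,0,u,v,w; 1,u,0,p,q; 1,v,p,0,r; 1,w,q,r,0]
    = 2*(- p*q*r + w*p*r + w*p*q - w*p^2 - w^2*p + v*q*r - v*q^2 + v*p*q - v*w*r + v*w*q
      + v*w*p - v^2*q - u*r^2 + u*q*r + u*p*r + u*w*r - u*w*q + u*w*p + u*v*r + u*v*q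
      - u*v*p - u^2*r) := by
  rw [det_fin_five]
  simp only [Matrix.of_apply, Matrix.cons_val, Matrix.cons_val_zero, Matrix.cons_val_one, Matrix.head_cons]
  ring

lemma cm_poly (a1 a2 a3 b1 b2 b3 c1 c2 c3 u v w p q r : ℝ)
    (hu : u = a1^2+a2^2+a3^2) (hv : v = b1^2+b2^2+b3^2) (hw : w = c1^2+c2^2+c3^2)
    (hp : p = (a1-b1)^2+(a2-b2)^2+(a3-b3)^2)
    (hq : q = (a1-c1)^2+(a2-c2)^2+(a3-c3)^2)
    (hr : r = (b1-c1)^2+(b2-c2)^2+(b3-c3)^2) :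
    (2*(- p*q*r + w*p*r + w*p*q - w*p^2 - w^2*p + v*q*r - v*q^2 + v*p*q - v*w*r + v*w*q
      + v*w*p - v^2*q - u*r^2 + u*q*r + u*p*r + u*w*r - u*w*q + u*w*p + u*v*r + u*v*q
      - u*v*p - u^2*r) : ℝ)
    = 8 * (a1*(b2*c3 - b3*c2) - a2*(b1*c3 - b3*c1) + a3*(b1*c2 - b2*c1))^2 := by
  subst hu hv hw hp hq hr
  ring

private lemma cm_value (x₀ x₁ x₂ x₃ : EuclideanSpace ℝ (Fin 3)) :
    cayleyMenger ![x₀, x₁, x₂, x₃] =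
      8 * ((x₁ 0 - x₀ 0)*((x₂ 1 - x₀ 1)*(x₃ 2 - x₀ 2) - (x₂ 2 - x₀ 2)*(x₃ 1 - x₀ 1))
         - (x₁ 1 - x₀ 1)*((x₂ 0 - x₀ 0)*(x₃ 2 - x₀ 2) - (x₂ 2 - x₀ 2)*(x₃ 0 - x₀ 0))
         + (x₁ 2 - x₀ 2)*((x₂ 0 - x₀ 0)*(x₃ 1 - x₀ 1) - (x₂ 1 - x₀ 1)*(x₃ 0 - x₀ 0)))^2 := by
  rw [cm_eq_explicit]
  have h0 : (![x₀, x₁, x₂, x₃] : Fin 4 → EuclideanSpace ℝ (Fin 3)) 0 = x₀ := rfl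
  have h1 : (![x₀, x₁, x₂, x₃] : Fin 4 → EuclideanSpace ℝ (Fin 3)) 1 = x₁ := rfl
  have h2 : (![x₀, x₁, x₂, x₃] : Fin 4 → EuclideanSpace ℝ (Fin 3)) 2 = x₂ := rfl
  have h3 : (![x₀, x₁, x₂, x₃] : Fin 4 → EuclideanSpace ℝ (Fin 3)) 3 = x₃ := rfl
  rw [h0, h1, h2, h3, cm_det5]
  rw [cm_poly (x₁ 0 - x₀ 0) (x₁ 1 - x₀ 1) (x₁ 2 - x₀ 2)
      (x₂ 0 - x₀ 0) (x₂ 1 - x₀ 1) (x₂ 2 - x₀ 2)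
      (x₃ 0 - x₀ 0) (x₃ 1 - x₀ 1) (x₃ 2 - x₀ 2)
      _ _ _ _ _ _
      (by rw [dist_sq_eq]; ring) (by rw [dist_sq_eq]; ring) (by rw [dist_sq_eq]; ring)
      (by rw [dist_sq_eq]; ring) (by rw [dist_sq_eq]; ring) (by rw [dist_sq_eq]; ring)]

theorem affineIndependent_iff_cayleyMenger_pos
    (x₀ x₁ x₂ x₃ : EuclideanSpace ℝ (Fin 3)) :
    AffineIndependent ℝ ![x₀, x₁, x₂, x₃] ↔ 0 < cayleyMenger ![x₀, x₁, x₂, x₃] := by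
  have haff : AffineIndependent ℝ ![x₀, x₁, x₂, x₃] ↔
      (Matrix.of ![(fun k => x₁ k - x₀ k), (fun k => x₂ k - x₀ k),
        (fun k => x₃ k - x₀ k)] : Matrix (Fin 3) (Fin 3) ℝ).det ≠ 0 := by
    rw [affineIndependent_iff_linearIndependent_vsub ℝ ![x₀, x₁, x₂, x₃] 0]
    rw [← linearIndependent_equiv (finSuccAboveEquiv (0 : Fin 4))]
    rw [← isUnit_iff_ne_zero, ← Matrix.isUnit_iff_isUnit_det]
    rw [← Matrix.linearIndependent_rows_iff_isUnit (K := ℝ)]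
    have h : ((fun i : {y : Fin 4 // y ≠ 0} =>
        (![x₀, x₁, x₂, x₃] i -ᵥ ![x₀, x₁, x₂, x₃] 0 : EuclideanSpace ℝ (Fin 3)))
          ∘ (finSuccAboveEquiv (0 : Fin 4)))
        = fun i => WithLp.toLp 2 ((Matrix.of ![(fun k => x₁ k - x₀ k), (fun k => x₂ k - x₀ k),
          (fun k => x₃ k - x₀ k)] : Matrix (Fin 3) (Fin 3) ℝ) i) := by
      funext i
      fin_cases i <;> rfl
    rw [h]
    exact (WithLp.linearEquiv 2 ℝ (Fin 3 → ℝ)).symm.toLinearMap.linearIndependent_iff (by simp)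
  have hdet : (Matrix.of ![(fun k => x₁ k - x₀ k), (fun k => x₂ k - x₀ k),
      (fun k => x₃ k - x₀ k)] : Matrix (Fin 3) (Fin 3) ℝ).det =
      (x₁ 0 - x₀ 0)*((x₂ 1 - x₀ 1)*(x₃ 2 - x₀ 2) - (x₂ 2 - x₀ 2)*(x₃ 1 - x₀ 1))
      - (x₁ 1 - x₀ 1)*((x₂ 0 - x₀ 0)*(x₃ 2 - x₀ 2) - (x₂ 2 - x₀ 2)*(x₃ 0 - x₀ 0))
      + (x₁ 2 - x₀ 2)*((x₂ 0 - x₀ 0)*(x₃ 1 - x₀ 1) - (x₂ 1 - x₀ 1)*(x₃ 0 - x₀ 0)) := by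
    rw [Matrix.det_fin_three]
    simp [Matrix.vecHead, Matrix.vecTail]
    ring
  rw [haff, hdet, cm_value x₀ x₁ x₂ x₃]
  constructor
  · intro hne
    positivity
  · intro hpos hzero
    rw [hzero] at hpos
    norm_num at hpos

end
end

section
/- Let V = {x_0, ..., x_5} and V' = {x_0', ..., x_5'} each be six points in R^3, and suppose A is the unique affine transformation with A(x_i) = x_i' for i = 0, 1, 2, 3, where x_0, x_1, x_2, x_3 are affinely independent and x_0', x_1', x_2', x_3' are affinely independent. Suppose that for every edge and diagonal choice of indices (i_0, i_1, i_2, i_3) appearing among the six points, vol(x'_{i_0}, x'_{i_1}, x'_{i_2}, x'_{i_3}) = |det A| · vol(x_{i_0}, x_{i_1}, x_{i_2}, x_{i_3}), and that for j = 4, 5 the points A(x_j) and x_j' lie in the same closed halfspace with respect to each of the planes aff{x_0', x_1', x_2'}, aff{x_0', x_1', x_3'}, and aff{x'_{j-4}, x_2', x_3'}. Then A(x_4) = x_4' and A(x_5) = x_5'. -/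
noncomputable section

local notation "V" => EuclideanSpace ℝ (Fin 3)

/-- The 3-dimensional volume of the tetrahedron with vertices `p 0, p 1, p 2, p 3`. -/
def tetraVol (p : Fin 4 → EuclideanSpace ℝ (Fin 3)) : ℝ :=
  |Matrix.det (Matrix.of fun i j : Fin 3 => (p i.succ - p 0) j)| / 6

namespace Aux

abbrev e : Module.Basis (Fin 3) ℝ V := PiLp.basisFun 2 ℝ (Fin 3)

lemma tetraVol_eq (p : Fin 4 → V) :
    tetraVol p = |(e).det (fun i => p i.succ - p 0)| / 6 := by
  have h : Matrix.det (Matrix.of fun i j : Fin 3 => (p i.succ - p 0) j) =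
      (e).det fun i => p i.succ - p 0 := by
    rw [Module.Basis.det_apply, ← Matrix.det_transpose]
    congr 1
  rw [tetraVol, h]

lemma tetraVol_map (A : V →ᵃ[ℝ] V) (p : Fin 4 → V) :
    tetraVol (fun i => A (p i)) = |LinearMap.det A.linear| * tetraVol p := by
  rw [tetraVol_eq, tetraVol_eq]
  have h : (fun i : Fin 3 => A (p i.succ) - A (p 0)) =
      ⇑A.linear ∘ (fun i : Fin 3 => p i.succ - p 0) := by
    funext i
    simp only [Function.comp_apply, ← vsub_eq_sub, AffineMap.linearMap_vsub]
  rw [h, Module.Basis.det_comp, abs_mul, mul_div_assoc]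

lemma sameRay_mul_nonneg {a b : ℝ} (h : SameRay ℝ a b) : 0 ≤ a * b := by
  rcases h with h | h | ⟨r, s, hr, hs, hrs⟩
  · simp [h]
  · simp [h]
  · simp only [smul_eq_mul] at hrs
    have h2 : r * (a * b) = s * (b * b) := by rw [← mul_assoc, hrs]; ring
    nlinarith [mul_self_nonneg b, mul_pos hr hs]

lemma eq_of_abs_eq_of_mul_nonneg {a b : ℝ} (h1 : |a| = |b|) (h2 : 0 ≤ a * b) : a = b := by
  rcases abs_eq_abs.1 h1 with h | h
  · exact h
  · nlinarith

lemma sign_key (f : V →ₗ[ℝ] ℝ) (z0 : V) (s : AffineSubspace ℝ V)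
    (hz : ∀ z ∈ s, f (z - z0) = 0) {p q : V} (h : s.WSameSide p q) :
    0 ≤ f (p - z0) * f (q - z0) := by
  obtain ⟨p₁, hp₁, p₂, hp₂, hray⟩ := h
  have h1 : f (p - z0) = f (p - p₁) := by
    have hh : f (p - z0) = f (p - p₁) + f (p₁ - z0) := by
      rw [← map_add]; congr 1; abel
    simp [hh, hz p₁ hp₁]
  have h2 : f (q - z0) = f (q - p₂) := by
    have hh : f (q - z0) = f (q - p₂) + f (p₂ - z0) := by
      rw [← map_add]; congr 1; abel
    simp [hh, hz p₂ hp₂]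
  rw [h1, h2]
  exact sameRay_mul_nonneg (hray.map f)

lemma expand3 (f : (V) [⋀^Fin 3]→ₗ[ℝ] ℝ) (u v x₁ x₂ x₃ : V) (a b c : ℝ) :
    f ![u, v, a • x₁ + b • x₂ + c • x₃] =
      a * f ![u, v, x₁] + b * f ![u, v, x₂] + c * f ![u, v, x₃] := by
  have h : ∀ w : V, ![u, v, w] = Function.update ![u, v, (0:V)] 2 w := by
    intro w
    funext i
    fin_cases i <;> simp [Function.update]
  rw [h, f.map_update_add, f.map_update_add, f.map_update_smul, f.map_update_smul,
    f.map_update_smul]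
  simp only [Function.update_idem, smul_eq_mul, ← h]

lemma expand_sub0 (f : (V) [⋀^Fin 3]→ₗ[ℝ] ℝ) (x y u w : V) :
    f ![x - y, u, w] = f ![x, u, w] - f ![y, u, w] := by
  have h : ∀ z : V, ![z, u, w] = Function.update ![(0:V), u, w] 0 z := by
    intro z
    funext i
    fin_cases i <;> simp [Function.update]
  rw [h, f.map_update_sub]
  simp only [← h]

lemma expand_sub1 (f : (V) [⋀^Fin 3]→ₗ[ℝ] ℝ) (u x y w : V) :
    f ![u, x - y, w] = f ![u, x, w] - f ![u, y, w] := by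
  have h : ∀ z : V, ![u, z, w] = Function.update ![u, (0:V), w] 1 z := by
    intro z
    funext i
    fin_cases i <;> simp [Function.update]
  rw [h, f.map_update_sub]
  simp only [← h]

end Aux

open Aux

/-- If the affine map `A` carries `x₀,…,x₃` to `y₀,…,y₃` (both quadruples affinely
independent), all tetrahedra spanned by the `y`'s have `|det A|` times the volume of the
corresponding tetrahedra spanned by the `x`'s, and for `j = 4, 5` the points `A (x j)` and
`y j` lie in the same closed halfspace with respect to each of the three planes
`aff{y₀,y₁,y₂}`, `aff{y₀,y₁,y₃}`, `aff{y_{j-4},y₂,y₃}`, then `A (x 4) = y 4` and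
`A (x 5) = y 5`. -/
theorem affineMap_eq_on_last_two_vertices
    (x y : Fin 6 → EuclideanSpace ℝ (Fin 3))
    (A : EuclideanSpace ℝ (Fin 3) →ᵃ[ℝ] EuclideanSpace ℝ (Fin 3))
    (hA0 : A (x 0) = y 0) (hA1 : A (x 1) = y 1) (hA2 : A (x 2) = y 2) (hA3 : A (x 3) = y 3)
    (hx : AffineIndependent ℝ ![x 0, x 1, x 2, x 3])
    (hy : AffineIndependent ℝ ![y 0, y 1, y 2, y 3])
    (hvol : ∀ i₀ i₁ i₂ i₃ : Fin 6,
      tetraVol ![y i₀, y i₁, y i₂, y i₃] =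
        |LinearMap.det A.linear| * tetraVol ![x i₀, x i₁, x i₂, x i₃])
    (h4a : (affineSpan ℝ ({y 0, y 1, y 2} : Set (EuclideanSpace ℝ (Fin 3)))).WSameSide
      (A (x 4)) (y 4))
    (h4b : (affineSpan ℝ ({y 0, y 1, y 3} : Set (EuclideanSpace ℝ (Fin 3)))).WSameSide
      (A (x 4)) (y 4))
    (h4c : (affineSpan ℝ ({y 0, y 2, y 3} : Set (EuclideanSpace ℝ (Fin 3)))).WSameSide
      (A (x 4)) (y 4))
    (h5a : (affineSpan ℝ ({y 0, y 1, y 2} : Set (EuclideanSpace ℝ (Fin 3)))).WSameSide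
      (A (x 5)) (y 5))
    (h5b : (affineSpan ℝ ({y 0, y 1, y 3} : Set (EuclideanSpace ℝ (Fin 3)))).WSameSide
      (A (x 5)) (y 5))
    (h5c : (affineSpan ℝ ({y 1, y 2, y 3} : Set (EuclideanSpace ℝ (Fin 3)))).WSameSide
      (A (x 5)) (y 5)) :
    A (x 4) = y 4 ∧ A (x 5) = y 5 := by
  classical
  set v : Fin 3 → EuclideanSpace ℝ (Fin 3) := ![y 1 - y 0, y 2 - y 0, y 3 - y 0] with hv
  have li : LinearIndependent ℝ v := by
    have h0 := (affineIndependent_iff_linearIndependent_vsub ℝ ![y 0, y 1, y 2, y 3] 0).mp hy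
    have hinj : Function.Injective
        (fun i : Fin 3 => (⟨i.succ, Fin.succ_ne_zero i⟩ : {x : Fin 4 // x ≠ 0})) := by
      intro a b hab
      have := congrArg Subtype.val hab
      simpa [Fin.succ_inj] using this
    have h1 := h0.comp _ hinj
    convert h1 using 1
    funext i
    fin_cases i <;> simp [hv]
    rfl
  have card : Fintype.card (Fin 3) = Module.finrank ℝ (EuclideanSpace ℝ (Fin 3)) := by
    simp [finrank_euclideanSpace]
  let b : Module.Basis (Fin 3) ℝ (EuclideanSpace ℝ (Fin 3)) :=
    basisOfLinearIndependentOfCardEqFinrank li card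
  have hb : ⇑b = v := coe_basisOfLinearIndependentOfCardEqFinrank li card
  set f : (EuclideanSpace ℝ (Fin 3)) [⋀^Fin 3]→ₗ[ℝ] ℝ := (e).det with hf
  set D : ℝ := f ![v 0, v 1, v 2] with hD_def
  have hvb : ![v 0, v 1, v 2] = ⇑b := by
    funext i; fin_cases i <;> simp [hb]
  have hD : D ≠ 0 := by
    rw [hD_def, hvb]
    refine (AlternatingMap.map_basis_ne_zero_iff b f).mpr ?_
    rw [hf]
    exact Module.Basis.det_ne_zero _
  -- coordinates
  set r : EuclideanSpace ℝ (Fin 3) → Fin 3 → ℝ := fun q i => b.repr (q - y 0) i with hr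
  have hrepr : ∀ q : EuclideanSpace ℝ (Fin 3),
      q - y 0 = r q 0 • v 0 + r q 1 • v 1 + r q 2 • v 2 := by
    intro q
    have h := b.sum_repr (q - y 0)
    rw [Fin.sum_univ_three] at h
    rw [← h]
    simp [hr, hb]
  -- determinant values on basis triples
  have hz3 : ∀ (u w : EuclideanSpace ℝ (Fin 3)), f ![u, w, w] = 0 := by
    intro u w
    exact f.map_eq_zero_of_eq _ (show ![u, w, w] 1 = ![u, w, w] 2 by simp) (by decide)
  have hz2 : ∀ (u w : EuclideanSpace ℝ (Fin 3)), f ![w, u, w] = 0 := by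
    intro u w
    exact f.map_eq_zero_of_eq _ (show ![w, u, w] 0 = ![w, u, w] 2 by simp) (by decide)
  have hz1 : ∀ (u w : EuclideanSpace ℝ (Fin 3)), f ![w, w, u] = 0 := by
    intro u w
    exact f.map_eq_zero_of_eq _ (show ![w, w, u] 0 = ![w, w, u] 1 by simp) (by decide)
  have sw021 : f ![v 0, v 2, v 1] = -D := by
    have h : ![v 0, v 2, v 1] = ![v 0, v 1, v 2] ∘ Equiv.swap (1 : Fin 3) 2 := by
      funext i
      fin_cases i <;> simp [Equiv.swap_apply_def] <;> rfl
    rw [h, f.map_swap _ (by decide), hD_def]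
  have sw120 : f ![v 1, v 2, v 0] = D := by
    have h : ![v 1, v 2, v 0] = ![v 0, v 2, v 1] ∘ Equiv.swap (0 : Fin 3) 2 := by
      funext i
      fin_cases i <;> simp [Equiv.swap_apply_def] <;> rfl
    rw [h, f.map_swap _ (by decide), sw021, neg_neg]
  have sw102 : f ![v 1, v 0, v 2] = -D := by
    have h : ![v 1, v 0, v 2] = ![v 0, v 1, v 2] ∘ Equiv.swap (0 : Fin 3) 1 := by
      funext i
      fin_cases i <;> simp [Equiv.swap_apply_def] <;> rfl
    rw [h, f.map_swap _ (by decide), hD_def]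
  -- coordinate expansions of determinants
  have cvolA : ∀ q : EuclideanSpace ℝ (Fin 3),
      f ![v 0, v 1, q - y 0] = r q 2 * D := by
    intro q
    rw [hrepr q, expand3, hz2, hz3, ← hD_def]
    ring
  have cvolB : ∀ q : EuclideanSpace ℝ (Fin 3),
      f ![v 0, v 2, q - y 0] = r q 1 * (-D) := by
    intro q
    rw [hrepr q, expand3, hz2, hz3, sw021]
    ring
  have cvolC : ∀ q : EuclideanSpace ℝ (Fin 3),
      f ![v 1, v 2, q - y 0] = r q 0 * D := by
    intro q
    rw [hrepr q, expand3, hz2, hz3, sw120]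
    ring
  -- values for the plane through y1 y2 y3
  have hF : ∀ u : EuclideanSpace ℝ (Fin 3), f ![v 1 - v 0, v 2 - v 0, u] =
      f ![v 1, v 2, u] - f ![v 1, v 0, u] - f ![v 0, v 2, u] + f ![v 0, v 0, u] := by
    intro u
    rw [expand_sub0, expand_sub1, expand_sub1]
    ring
  have hF0 : f ![v 1 - v 0, v 2 - v 0, v 0] = D := by
    rw [hF, sw120, hz3, hz2, hz1]
    ring
  have hF1 : f ![v 1 - v 0, v 2 - v 0, v 1] = D := by
    rw [hF, hz2, hz2, sw021, hz1]
    ring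
  have hF2 : f ![v 1 - v 0, v 2 - v 0, v 2] = D := by
    rw [hF, hz3, sw102, hz3, hz1]
    ring
  have cvolC5 : ∀ q : EuclideanSpace ℝ (Fin 3),
      f ![v 1 - v 0, v 2 - v 0, q - y 1] = (r q 0 + r q 1 + r q 2 - 1) * D := by
    intro q
    have hq : q - y 1 = (r q 0 - 1) • v 0 + r q 1 • v 1 + r q 2 • v 2 := by
      have h1 : q - y 1 = (q - y 0) - v 0 := by
        simp only [hv]
        show q - y 1 = q - y 0 - (![y 1 - y 0, y 2 - y 0, y 3 - y 0] 0)
        simp only [Matrix.cons_val_zero]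
        abel
      rw [h1, hrepr q, sub_smul, one_smul]
      abel
    rw [hq, expand3, hF0, hF1, hF2]
    ring
  -- volume formulas
  have hDne : |D| ≠ 0 := abs_ne_zero.mpr hD
  have volA : ∀ q : EuclideanSpace ℝ (Fin 3),
      tetraVol ![y 0, y 1, y 2, q] = |r q 2| * |D| / 6 := by
    intro q
    rw [tetraVol_eq]
    have hrow : (fun i : Fin 3 => ![y 0, y 1, y 2, q] i.succ - ![y 0, y 1, y 2, q] 0) =
        ![v 0, v 1, q - y 0] := by
      funext i
      fin_cases i <;> simp [hv]
    rw [hrow, ← hf, cvolA, abs_mul]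
  have volB : ∀ q : EuclideanSpace ℝ (Fin 3),
      tetraVol ![y 0, y 1, y 3, q] = |r q 1| * |D| / 6 := by
    intro q
    rw [tetraVol_eq]
    have hrow : (fun i : Fin 3 => ![y 0, y 1, y 3, q] i.succ - ![y 0, y 1, y 3, q] 0) =
        ![v 0, v 2, q - y 0] := by
      funext i
      fin_cases i <;> simp [hv]
    rw [hrow, ← hf, cvolB, abs_mul, abs_neg]
  have volC : ∀ q : EuclideanSpace ℝ (Fin 3),
      tetraVol ![y 0, y 2, y 3, q] = |r q 0| * |D| / 6 := by
    intro q
    rw [tetraVol_eq]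
    have hrow : (fun i : Fin 3 => ![y 0, y 2, y 3, q] i.succ - ![y 0, y 2, y 3, q] 0) =
        ![v 1, v 2, q - y 0] := by
      funext i
      fin_cases i <;> simp [hv]
    rw [hrow, ← hf, cvolC, abs_mul]
  have volC5 : ∀ q : EuclideanSpace ℝ (Fin 3),
      tetraVol ![y 1, y 2, y 3, q] = |r q 0 + r q 1 + r q 2 - 1| * |D| / 6 := by
    intro q
    rw [tetraVol_eq]
    have hrow : (fun i : Fin 3 => ![y 1, y 2, y 3, q] i.succ - ![y 1, y 2, y 3, q] 0) =
        ![v 1 - v 0, v 2 - v 0, q - y 1] := by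
      funext i
      fin_cases i <;> simp [hv] <;> abel
    rw [hrow, ← hf, cvolC5, abs_mul]
  -- volume equalities between images and targets
  have himg : ∀ (i₀ i₁ i₂ : Fin 6) (j : Fin 6), A (x i₀) = y i₀ → A (x i₁) = y i₁ →
      A (x i₂) = y i₂ →
      tetraVol ![y i₀, y i₁, y i₂, A (x j)] = tetraVol ![y i₀, y i₁, y i₂, y j] := by
    intro i₀ i₁ i₂ j h₀ h₁ h₂
    have hcomp : ![y i₀, y i₁, y i₂, A (x j)] = fun i => A (![x i₀, x i₁, x i₂, x j] i) := by
      funext i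
      fin_cases i <;> simp [h₀, h₁, h₂]
    rw [hcomp, tetraVol_map]
    exact (hvol i₀ i₁ i₂ j).symm
  have cancel : ∀ a c : ℝ, a * |D| / 6 = c * |D| / 6 → a = c := by
    intro a c h
    have h6 : a * |D| = c * |D| := by linarith
    exact mul_right_cancel₀ hDne h6
  -- sign helper
  have signK : ∀ (g : (EuclideanSpace ℝ (Fin 3)) →ₗ[ℝ] ℝ) (z0 : EuclideanSpace ℝ (Fin 3))
      (s : Set (EuclideanSpace ℝ (Fin 3))), (∀ z ∈ s, g (z - z0) = 0) →
      ∀ p q : EuclideanSpace ℝ (Fin 3), (affineSpan ℝ s).WSameSide p q →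
      0 ≤ g (p - z0) * g (q - z0) := by
    intro g z0 s hs p q h
    refine sign_key g z0 _ ?_ h
    intro z hzmem
    have hle : affineSpan ℝ s ≤ AffineSubspace.mk' z0 (LinearMap.ker g) := by
      rw [affineSpan_le]
      intro w hw
      show w ∈ AffineSubspace.mk' z0 (LinearMap.ker g)
      rw [AffineSubspace.mem_mk']
      simpa [vsub_eq_sub] using hs w hw
    have hm := hle hzmem
    simp only [AffineSubspace.mem_coe, AffineSubspace.mem_mk'] at hm
    simpa [vsub_eq_sub] using hm
  -- basis vector identities
  have hb0 : y 1 - y 0 = b 0 := by simp [hb, hv]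
  have hb1 : y 2 - y 0 = b 1 := by simp [hb, hv]
  have hb2 : y 3 - y 0 = b 2 := by simp [hb, hv]
  -- coordinate 2 equality for j = 4,5 (plane y0 y1 y2)
  have hsA : ∀ z ∈ ({y 0, y 1, y 2} : Set (EuclideanSpace ℝ (Fin 3))),
      b.coord 2 (z - y 0) = 0 := by
    intro z hzs
    simp only [Set.mem_insert_iff, Set.mem_singleton_iff] at hzs
    rcases hzs with rfl | rfl | rfl
    · simp
    · rw [hb0]; simp
    · rw [hb1]; simp
  have c42 : r (A (x 4)) 2 = r (y 4) 2 := by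
    refine eq_of_abs_eq_of_mul_nonneg ?_ ?_
    · exact cancel _ _ (by rw [← volA, ← volA]; exact himg 0 1 2 4 hA0 hA1 hA2)
    · simpa [hr, Module.Basis.coord_apply] using signK (b.coord 2) (y 0) _ hsA _ _ h4a
  have c52 : r (A (x 5)) 2 = r (y 5) 2 := by
    refine eq_of_abs_eq_of_mul_nonneg ?_ ?_
    · exact cancel _ _ (by rw [← volA, ← volA]; exact himg 0 1 2 5 hA0 hA1 hA2)
    · simpa [hr, Module.Basis.coord_apply] using signK (b.coord 2) (y 0) _ hsA _ _ h5a
  -- coordinate 1 (plane y0 y1 y3)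
  have hsB : ∀ z ∈ ({y 0, y 1, y 3} : Set (EuclideanSpace ℝ (Fin 3))),
      b.coord 1 (z - y 0) = 0 := by
    intro z hzs
    simp only [Set.mem_insert_iff, Set.mem_singleton_iff] at hzs
    rcases hzs with rfl | rfl | rfl
    · simp
    · rw [hb0]; simp
    · rw [hb2]; simp
  have c41 : r (A (x 4)) 1 = r (y 4) 1 := by
    refine eq_of_abs_eq_of_mul_nonneg ?_ ?_
    · exact cancel _ _ (by rw [← volB, ← volB]; exact himg 0 1 3 4 hA0 hA1 hA3)
    · simpa [hr, Module.Basis.coord_apply] using signK (b.coord 1) (y 0) _ hsB _ _ h4b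
  have c51 : r (A (x 5)) 1 = r (y 5) 1 := by
    refine eq_of_abs_eq_of_mul_nonneg ?_ ?_
    · exact cancel _ _ (by rw [← volB, ← volB]; exact himg 0 1 3 5 hA0 hA1 hA3)
    · simpa [hr, Module.Basis.coord_apply] using signK (b.coord 1) (y 0) _ hsB _ _ h5b
  -- coordinate 0 for j = 4 (plane y0 y2 y3)
  have hsC : ∀ z ∈ ({y 0, y 2, y 3} : Set (EuclideanSpace ℝ (Fin 3))),
      b.coord 0 (z - y 0) = 0 := by
    intro z hzs
    simp only [Set.mem_insert_iff, Set.mem_singleton_iff] at hzs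
    rcases hzs with rfl | rfl | rfl
    · simp
    · rw [hb1]; simp
    · rw [hb2]; simp
  have c40 : r (A (x 4)) 0 = r (y 4) 0 := by
    refine eq_of_abs_eq_of_mul_nonneg ?_ ?_
    · exact cancel _ _ (by rw [← volC, ← volC]; exact himg 0 2 3 4 hA0 hA2 hA3)
    · simpa [hr, Module.Basis.coord_apply] using signK (b.coord 0) (y 0) _ hsC _ _ h4c
  -- coordinate 0 for j = 5 (plane y1 y2 y3)
  set g5 : (EuclideanSpace ℝ (Fin 3)) →ₗ[ℝ] ℝ := b.coord 0 + b.coord 1 + b.coord 2 with hg5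
  have hg5val : ∀ q : EuclideanSpace ℝ (Fin 3),
      g5 (q - y 1) = r q 0 + r q 1 + r q 2 - 1 := by
    intro q
    have hsplit : q - y 1 = (q - y 0) - b 0 := by rw [← hb0]; abel
    rw [hsplit, map_sub]
    simp [hg5, hr, Module.Basis.coord_apply]
  have hsC5 : ∀ z ∈ ({y 1, y 2, y 3} : Set (EuclideanSpace ℝ (Fin 3))),
      g5 (z - y 1) = 0 := by
    intro z hzs
    simp only [Set.mem_insert_iff, Set.mem_singleton_iff] at hzs
    rcases hzs with rfl | rfl | rfl
    · simp
    · have hsplit : y 2 - y 1 = b 1 - b 0 := by rw [← hb0, ← hb1]; abel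
      rw [hsplit, map_sub]
      simp [hg5]
    · have hsplit : y 3 - y 1 = b 2 - b 0 := by rw [← hb0, ← hb2]; abel
      rw [hsplit, map_sub]
      simp [hg5]
  have c50 : r (A (x 5)) 0 = r (y 5) 0 := by
    have habs : |r (A (x 5)) 0 + r (A (x 5)) 1 + r (A (x 5)) 2 - 1| =
        |r (y 5) 0 + r (y 5) 1 + r (y 5) 2 - 1| :=
      cancel _ _ (by rw [← volC5, ← volC5]; exact himg 1 2 3 5 hA1 hA2 hA3)
    have hsgn := signK g5 (y 1) _ hsC5 _ _ h5c
    rw [hg5val, hg5val] at hsgn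
    have := eq_of_abs_eq_of_mul_nonneg habs hsgn
    linarith [c51, c52, this]
  -- conclusion
  have heqpt : ∀ p q : EuclideanSpace ℝ (Fin 3),
      r p 0 = r q 0 → r p 1 = r q 1 → r p 2 = r q 2 → p = q := by
    intro p q h0 h1 h2
    have hre : b.repr (p - y 0) = b.repr (q - y 0) := by
      ext i
      fin_cases i
      · exact h0
      · exact h1
      · exact h2
    have hsub : p - y 0 = q - y 0 := b.repr.injective hre
    have := congrArg (· + y 0) hsub
    simpa using this
  exact ⟨heqpt _ _ c40 c41 c42, heqpt _ _ c50 c51 c52⟩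
end
end

section
/- Let x_0, ..., x_5 be six points in R^3 such that for each of the 8 triangles F of the octahedral combinatorial structure (faces {025}, {052} etc. of the regular octahedron with vertex labels as in a standard antipodal pairing x_0–x_5, x_1–x_4, x_2–x_3), the three vertices not in F lie strictly on one side of the plane aff F and F has affinely independent vertices. Then the convex hull of {x_0, ..., x_5} is a convex polytope whose faces are exactly the 8 triangles, i.e., each such triangle ⟨x_i, x_j, x_k⟩ is a face (2-dimensional) of conv{x_0, ..., x_5}. -/
noncomputable section

/-- The 8 faces of the octahedral combinatorial structure on labels `{0,…,5}` with
antipodal pairs `(0,5)`, `(1,4)`, `(2,3)`: the triples containing no antipodal pair. -/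
def octFaces : List (Fin 6 × Fin 6 × Fin 6) :=
  [(0, 1, 2), (0, 1, 3), (0, 4, 2), (0, 4, 3), (5, 1, 2), (5, 1, 3), (5, 4, 2), (5, 4, 3)]

/-- Six points in `ℝ³` form a convex octahedron (with the standard octahedral
combinatorics) if each face has affinely independent vertices and, for each face,
the three vertices not on the face lie strictly on one side of its plane. -/
def IsConvexOctahedron (x : Fin 6 → EuclideanSpace ℝ (Fin 3)) : Prop :=
  ∀ f ∈ octFaces,
    AffineIndependent ℝ ![x f.1, x f.2.1, x f.2.2] ∧
    ∀ m m' : Fin 6, m ∉ ({f.1, f.2.1, f.2.2} : Set (Fin 6)) →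
      m' ∉ ({f.1, f.2.1, f.2.2} : Set (Fin 6)) →
      (affineSpan ℝ ({x f.1, x f.2.1, x f.2.2} : Set (EuclideanSpace ℝ (Fin 3)))).SSameSide
        (x m) (x m')

open Finset Module
open scoped RealInnerProductSpace

local notation "E3" => EuclideanSpace ℝ (Fin 3)

lemma oct_key (x : Fin 6 → E3) (i j k : Fin 6)
    (hind : AffineIndependent ℝ ![x i, x j, x k])
    (hside : ∀ m m' : Fin 6, m ∉ ({i, j, k} : Set (Fin 6)) → m' ∉ ({i, j, k} : Set (Fin 6)) →
      (affineSpan ℝ ({x i, x j, x k} : Set E3)).SSameSide (x m) (x m'))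
    (m0 : Fin 6) (hm0 : m0 ∉ ({i, j, k} : Set (Fin 6))) :
    ∃ (w : E3 →ₗ[ℝ] ℝ) (c : ℝ),
      w ≠ 0 ∧ (∀ p ∈ convexHull ℝ (Set.range x), w p ≤ c) ∧
      {p ∈ convexHull ℝ (Set.range x) | w p = c} = convexHull ℝ ({x i, x j, x k} : Set E3) := by
  classical
  set s := affineSpan ℝ ({x i, x j, x k} : Set E3) with hs
  set W := vectorSpan ℝ ({x i, x j, x k} : Set E3) with hWdef
  have hxi : x i ∈ s := subset_affineSpan ℝ _ (by simp)
  have hdir : s.direction = W := direction_affineSpan ℝ _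
  have hW2 : finrank ℝ W = 2 := by
    have h := hind.finrank_vectorSpan (by simp : Fintype.card (Fin 3) = 2 + 1)
    have hr : Set.range ![x i, x j, x k] = ({x i, x j, x k} : Set E3) := by
      ext p; simp [Matrix.range_cons, Matrix.range_empty]; tauto
    rwa [hr] at h
  have hWo : finrank ℝ Wᗮ = 1 := by
    have h := W.finrank_add_finrank_orthogonal
    rw [hW2, finrank_euclideanSpace_fin] at h
    omega
  obtain ⟨v0, hv0W, hv00⟩ := Wᗮ.exists_mem_ne_zero_of_ne_bot
    (by intro h; rw [h, finrank_bot] at hWo; exact one_ne_zero hWo.symm)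
  -- characterization of membership in s
  have hchar0 : ∀ p : E3, p ∈ s ↔ ⟪v0, p⟫ = ⟪v0, x i⟫ := by
    intro p
    constructor
    · intro hp
      have hd : p -ᵥ x i ∈ W := by
        rw [← hdir]; exact AffineSubspace.vsub_mem_direction hp hxi
      rw [vsub_eq_sub] at hd
      have h0 : ⟪p - x i, v0⟫ = 0 := (Submodule.mem_orthogonal W v0).mp hv0W _ hd
      have h1 : ⟪v0, p - x i⟫ = 0 := by rw [real_inner_comm]; exact h0
      have h2 : ⟪v0, p⟫ - ⟪v0, x i⟫ = 0 := by rw [← inner_sub_right]; exact h1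
      linarith
    · intro hp
      have hspan : (ℝ ∙ v0) = Wᗮ := by
        apply Submodule.eq_of_le_of_finrank_eq
        · rwa [Submodule.span_singleton_le_iff_mem]
        · rw [hWo, finrank_span_singleton hv00]
      have hmem : p - x i ∈ Wᗮᗮ := by
        rw [← hspan, Submodule.mem_orthogonal_singleton_iff_inner_right]
        rw [inner_sub_right, hp, sub_self]
      rw [Submodule.orthogonal_orthogonal] at hmem
      have : (p - x i) +ᵥ x i ∈ s :=
        AffineSubspace.vadd_mem_of_mem_direction (by rwa [hdir]) hxi
      simpa [vadd_eq_add, sub_add_cancel] using this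
  -- choose sign
  have hm0ne : ⟪v0, x m0⟫ ≠ ⟪v0, x i⟫ := fun h => (hside m0 m0 hm0 hm0).2.1 ((hchar0 _).mpr h)
  obtain ⟨v, hvne, hchar, hm0lt⟩ :
      ∃ v : E3, v ≠ 0 ∧ (∀ p : E3, p ∈ s ↔ ⟪v, p⟫ = ⟪v, x i⟫) ∧ ⟪v, x m0⟫ < ⟪v, x i⟫ := by
    rcases lt_or_gt_of_ne hm0ne with h | h
    · exact ⟨v0, hv00, hchar0, h⟩
    · refine ⟨-v0, neg_ne_zero.mpr hv00, fun p => ?_, ?_⟩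
      · rw [hchar0, inner_neg_left, inner_neg_left, neg_inj]
      · rw [inner_neg_left, inner_neg_left]
        exact neg_lt_neg h
  set c := ⟪v, x i⟫ with hc
  have hlt : ∀ m : Fin 6, m ∉ ({i, j, k} : Set (Fin 6)) → ⟪v, x m⟫ < c := by
    intro m hm
    have hss := hside m m0 hm hm0
    obtain ⟨p1, hp1, p2, hp2, hray⟩ := hss.1
    have hmne : ⟪v, x m⟫ ≠ c := fun h => hss.2.1 ((hchar _).mpr h)
    have hray' := hray.map (innerₛₗ ℝ v)
    have e1 : (innerₛₗ ℝ v) (x m -ᵥ p1) = ⟪v, x m⟫ - c := by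
      rw [innerₛₗ_apply_apply]
      simp only [vsub_eq_sub, inner_sub_right]
      rw [(hchar p1).mp hp1]
    have e2 : (innerₛₗ ℝ v) (x m0 -ᵥ p2) = ⟪v, x m0⟫ - c := by
      rw [innerₛₗ_apply_apply]
      simp only [vsub_eq_sub, inner_sub_right]
      rw [(hchar p2).mp hp2]
    rw [e1, e2] at hray'
    obtain ⟨r1, r2, hr1, hr2, hr⟩ := hray'.exists_pos (sub_ne_zero.mpr hmne)
      (sub_ne_zero.mpr hm0lt.ne)
    have : r1 * (⟪v, x m⟫ - c) < 0 := by
      rw [smul_eq_mul, smul_eq_mul] at hr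
      rw [hr]
      exact mul_neg_of_pos_of_neg hr2 (by linarith)
    nlinarith
  have hle : ∀ n : Fin 6, ⟪v, x n⟫ ≤ c := by
    intro n
    by_cases hn : n ∈ ({i, j, k} : Set (Fin 6))
    · have : x n ∈ s := subset_affineSpan ℝ _ (by
        simp only [Set.mem_insert_iff, Set.mem_singleton_iff] at hn
        rcases hn with rfl | rfl | rfl <;> simp)
      exact ((hchar _).mp this).le
    · exact (hlt n hn).le
  refine ⟨innerₛₗ ℝ v, c, ?_, ?_, ?_⟩
  · intro h
    have : ⟪v, v⟫ = 0 := by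
      have := DFunLike.congr_fun h v
      simpa [innerₛₗ_apply_apply] using this
    exact hvne (inner_self_eq_zero.mp this)
  · intro p hp
    have : convexHull ℝ (Set.range x) ⊆ {q : E3 | (innerₛₗ ℝ v) q ≤ c} := by
      apply convexHull_min
      · rintro _ ⟨n, rfl⟩
        simpa [innerₛₗ_apply_apply] using hle n
      · exact convex_halfSpace_le (innerₛₗ ℝ v).isLinear c
    exact this hp
  · ext p
    simp only [Set.mem_sep_iff]
    constructor
    · rintro ⟨hp, hpc⟩
      rw [convexHull_range_eq_exists_affineCombination] at hp
      obtain ⟨t, a, ha0, ha1, hpa⟩ := hp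
      set a' : Fin 6 → ℝ := Set.indicator ↑t a with ha'
      have ha'0 : ∀ n, 0 ≤ a' n := by
        intro n
        by_cases hn : n ∈ t
        · rw [ha', Set.indicator_of_mem (Finset.mem_coe.mpr hn)]
          exact ha0 n hn
        · rw [ha', Set.indicator_of_notMem (fun hh => hn (Finset.mem_coe.mp hh))]
      have ha'1 : ∑ n, a' n = 1 := by
        rw [ha', Finset.sum_indicator_subset a t.subset_univ]
        exact ha1
      have hpsum : p = ∑ n, a' n • x n := by
        rw [← hpa, Finset.affineCombination_indicator_subset a x (Finset.subset_univ t),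
          Finset.affineCombination_eq_linear_combination _ _ _ ha'1]
      have hinner : ∑ n, a' n * (⟪v, x n⟫ - c) = 0 := by
        have h1 : ⟪v, p⟫ = ∑ n, a' n * ⟪v, x n⟫ := by
          rw [hpsum, inner_sum]
          exact Finset.sum_congr rfl fun n _ => real_inner_smul_right v (x n) (a' n)
        have h2 : ⟪v, p⟫ = c := by simpa [innerₛₗ_apply_apply] using hpc
        have h3 : ∑ n, a' n * c = c := by rw [← Finset.sum_mul, ha'1, one_mul]
        calc ∑ n, a' n * (⟪v, x n⟫ - c) = (∑ n, a' n * ⟪v, x n⟫) - ∑ n, a' n * c := by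
              rw [← Finset.sum_sub_distrib]; congr 1; ext n; ring
          _ = 0 := by rw [← h1, h2, h3, sub_self]
      have hzero : ∀ n : Fin 6, n ∉ ({i, j, k} : Set (Fin 6)) → a' n = 0 := by
        intro n hn
        have hterm : ∀ m ∈ Finset.univ, a' m * (⟪v, x m⟫ - c) ≤ 0 := fun m _ =>
          mul_nonpos_of_nonneg_of_nonpos (ha'0 m) (by linarith [hle m])
        have := (Finset.sum_eq_zero_iff_of_nonpos hterm).mp hinner n (Finset.mem_univ n)
        rcases mul_eq_zero.mp this with h | h
        · exact h
        · exact absurd h (by have := hlt n hn; intro hh; linarith)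
      -- rewrite p as a combination of the face vertices
      set y : Fin 6 → E3 := fun n => if n ∈ ({i, j, k} : Set (Fin 6)) then x n else x i with hy
      have hpy : p = ∑ n, a' n • y n := by
        rw [hpsum]
        refine Finset.sum_congr rfl fun n _ => ?_
        show a' n • x n = a' n • (if n ∈ ({i, j, k} : Set (Fin 6)) then x n else x i)
        by_cases hn : n ∈ ({i, j, k} : Set (Fin 6))
        · rw [if_pos hn]
        · rw [hzero n hn, zero_smul, zero_smul]
      rw [hpy]
      refine (convex_convexHull ℝ _).sum_mem (fun n _ => ha'0 n) ha'1 (fun n _ => ?_)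
      apply subset_convexHull
      show (if n ∈ ({i, j, k} : Set (Fin 6)) then x n else x i) ∈ ({x i, x j, x k} : Set E3)
      by_cases hn : n ∈ ({i, j, k} : Set (Fin 6))
      · rw [if_pos hn]
        simp only [Set.mem_insert_iff, Set.mem_singleton_iff] at hn ⊢
        rcases hn with rfl | rfl | rfl
        · exact Or.inl rfl
        · exact Or.inr (Or.inl rfl)
        · exact Or.inr (Or.inr rfl)
      · rw [if_neg hn]
        exact Set.mem_insert _ _
    · intro hq
      constructor
      · refine convexHull_mono ?_ hq
        rintro _ (rfl | rfl | rfl) <;> exact Set.mem_range_self _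
      · have : convexHull ℝ ({x i, x j, x k} : Set E3) ⊆ {q : E3 | (innerₛₗ ℝ v) q = c} := by
          apply convexHull_min
          · rintro _ (rfl | rfl | rfl) <;>
              simpa [innerₛₗ_apply_apply] using (hchar _).mp (subset_affineSpan ℝ _ (by simp))
          · exact convex_hyperplane (innerₛₗ ℝ v).isLinear c
        exact this hq


/-- If six points in ℝ³ satisfy the convex-octahedron conditions, then each of the
8 combinatorial triangles is a (2-dimensional) face of the convex hull of the six points,
i.e. is cut out by a supporting hyperplane. -/
theorem octahedron_faces_are_faces (x : Fin 6 → EuclideanSpace ℝ (Fin 3))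
    (hx : IsConvexOctahedron x) :
    ∀ f ∈ octFaces, ∃ (w : EuclideanSpace ℝ (Fin 3) →ₗ[ℝ] ℝ) (c : ℝ),
      w ≠ 0 ∧
      (∀ p ∈ convexHull ℝ (Set.range x), w p ≤ c) ∧
      {p ∈ convexHull ℝ (Set.range x) | w p = c} =
        convexHull ℝ ({x f.1, x f.2.1, x f.2.2} : Set (EuclideanSpace ℝ (Fin 3))) := by
  intro f hf
  obtain ⟨h1, h2⟩ := hx f hf
  fin_cases hf
  · exact oct_key x _ _ _ h1 h2 3 (by simp)
  · exact oct_key x _ _ _ h1 h2 2 (by simp)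
  · exact oct_key x _ _ _ h1 h2 3 (by simp)
  · exact oct_key x _ _ _ h1 h2 2 (by simp)
  · exact oct_key x _ _ _ h1 h2 3 (by simp)
  · exact oct_key x _ _ _ h1 h2 2 (by simp)
  · exact oct_key x _ _ _ h1 h2 3 (by simp)
  · exact oct_key x _ _ _ h1 h2 2 (by simp)
end
end

section
/- If F is a triangle with affinely independent vertices contained in a finite point set S ⊂ R^3 such that all points of S not in F lie in one open halfspace determined by aff F, then conv F is a face of the polytope conv S, and every vertex of F is a vertex (extreme point) of conv S. -/
open Set RealInnerProductSpace

noncomputable section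

section Aux
variable {E : Type*} [AddCommGroup E] [Module ℝ E]

lemma key_hull_lemma (T : Set E) (w : E →ₗ[ℝ] ℝ) (c₀ : ℝ)
    (hT : ∀ x ∈ T, w x ≤ c₀) {p : E} (hp : p ∈ convexHull ℝ T) (hwp : w p = c₀) :
    p ∈ convexHull ℝ {x ∈ T | w x = c₀} := by
  rw [convexHull_eq] at hp
  obtain ⟨ι, t, f, z, hf, hsum, hz, hcm⟩ := hp
  have hwp' : ∑ i ∈ t, f i * w (z i) = c₀ := by
    rw [← hwp, ← hcm, Finset.centerMass_eq_of_sum_1 _ _ hsum, map_sum]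
    simp [map_smul, smul_eq_mul]
  have hkey : ∀ i ∈ t, f i ≠ 0 → w (z i) = c₀ := by
    intro i hi hfi
    by_contra hne
    have hlt : w (z i) < c₀ := lt_of_le_of_ne (hT _ (hz i hi)) hne
    have hfi' : 0 < f i := (hf i hi).lt_of_ne (Ne.symm hfi)
    have hstrict : ∑ j ∈ t, f j * w (z j) < ∑ j ∈ t, f j * c₀ :=
      Finset.sum_lt_sum (fun j hj => mul_le_mul_of_nonneg_left (hT _ (hz j hj)) (hf j hj))
        ⟨i, hi, mul_lt_mul_of_pos_left hlt hfi'⟩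
    rw [← Finset.sum_mul, hsum, one_mul, hwp'] at hstrict
    exact lt_irrefl _ hstrict
  rw [← hcm, ← Finset.centerMass_filter_ne_zero (w := f) z]
  apply Finset.centerMass_mem_convexHull
  · intro i hi; exact hf i (Finset.mem_filter.1 hi).1
  · rw [Finset.sum_filter_ne_zero, hsum]; norm_num
  · intro i hi
    obtain ⟨hit, hfi⟩ := Finset.mem_filter.1 hi
    exact ⟨hz i hit, hkey i hit hfi⟩

lemma extremePoint_of_not_mem_hull_diff {s : Set E} {x : E} (hx : x ∈ s)
    (h : x ∉ convexHull ℝ (s \ {x})) : x ∈ (convexHull ℝ s).extremePoints ℝ := by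
  rcases (s \ {x}).eq_empty_or_nonempty with he | hne
  · have hs : s = {x} := by
      apply Subset.antisymm
      · intro y hy
        by_contra hy'
        exact absurd he (Set.nonempty_iff_ne_empty.1 ⟨y, hy, hy'⟩)
      · simpa using hx
    rw [hs, convexHull_singleton, extremePoints_singleton]
    exact mem_singleton x
  · rw [mem_extremePoints_iff_forall_segment]
    refine ⟨subset_convexHull ℝ s hx, ?_⟩
    intro x₁ hx₁ x₂ hx₂ hseg
    have hins : insert x (s \ {x}) = s := by
      rw [Set.insert_diff_singleton, Set.insert_eq_self.2 hx]
    rw [← hins, convexHull_insert hne] at hx₁ hx₂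
    obtain ⟨x', hx', z₁, hz₁, hxz₁⟩ := mem_convexJoin.1 hx₁
    obtain ⟨x'', hx'', z₂, hz₂, hxz₂⟩ := mem_convexJoin.1 hx₂
    rw [Set.mem_singleton_iff] at hx' hx''
    obtain ⟨u₁, v₁, hu₁, hv₁, huv₁, h₁⟩ := hxz₁
    obtain ⟨u₂, v₂, hu₂, hv₂, huv₂, h₂⟩ := hxz₂
    rw [hx'] at h₁
    rw [hx''] at h₂
    obtain ⟨θ₁, θ₂, hθ₁, hθ₂, hθ, hx'⟩ := hseg
    have hxe : x = (θ₁*u₁+θ₂*u₂) • x + (θ₁*v₁) • z₁ + (θ₂*v₂) • z₂ := by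
      linear_combination (norm := module) (-1 : ℝ) • hx' + (-θ₁) • h₁ + (-θ₂) • h₂
    have hsum : (θ₁*u₁+θ₂*u₂) + ((θ₁*v₁)+(θ₂*v₂)) = 1 := by
      linear_combination θ₁ * huv₁ + θ₂ * huv₂ + hθ
    have hp0 : 0 ≤ θ₁*v₁ := mul_nonneg hθ₁ hv₁
    have hq0 : 0 ≤ θ₂*v₂ := mul_nonneg hθ₂ hv₂
    rcases eq_or_lt_of_le (add_nonneg hp0 hq0) with hpq | hpq
    · have hp : θ₁*v₁ = 0 := by linarith
      have hq : θ₂*v₂ = 0 := by linarith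
      rcases eq_or_lt_of_le hθ₁ with h0 | h0
      · right
        have hθ₂1 : θ₂ = 1 := by linarith
        have hv₂0 : v₂ = 0 := by
          rcases mul_eq_zero.1 hq with h' | h' <;> [linarith; exact h']
        have hu₂1 : u₂ = 1 := by linarith
        rw [← h₂, hv₂0, hu₂1]; simp
      · left
        have hv₁0 : v₁ = 0 := by
          rcases mul_eq_zero.1 hp with h' | h' <;> [linarith; exact h']
        have hu₁1 : u₁ = 1 := by linarith
        rw [← h₁, hv₁0, hu₁1]; simp
    · exfalso
      apply h
      set p := θ₁*v₁ with hpdef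
      set q := θ₂*v₂ with hqdef
      have h1 : (p+q) • x = p • z₁ + q • z₂ := by
        have hc : (θ₁*u₁+θ₂*u₂) = 1 - (p+q) := by linarith
        rw [hc] at hxe
        linear_combination (norm := module) hxe
      have hne' : p + q ≠ 0 := ne_of_gt hpq
      have hx2 : x = (p/(p+q)) • z₁ + (q/(p+q)) • z₂ := by
        have h2 : (p+q)⁻¹ • ((p+q) • x) = (p+q)⁻¹ • (p • z₁ + q • z₂) := by rw [h1]
        rw [smul_smul, inv_mul_cancel₀ hne', one_smul] at h2
        rw [h2, smul_add, smul_smul, smul_smul, div_eq_inv_mul, div_eq_inv_mul]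
      have hmem : (p/(p+q)) • z₁ + (q/(p+q)) • z₂ ∈ convexHull ℝ (s \ {x}) :=
        (convex_convexHull ℝ _) hz₁ hz₂ (div_nonneg hp0 hpq.le) (div_nonneg hq0 hpq.le)
          (by field_simp)
      nth_rewrite 2 [hx2]
      exact hmem

end Aux

/-- If a triangle `⟨a,b,c⟩` with affinely independent vertices is contained in a finite
set `S ⊂ ℝ³` and all points of `S` not among `a,b,c` lie strictly on one side of the plane
`aff{a,b,c}`, then `conv{a,b,c}` is a face of `conv S` (cut out by a supporting
hyperplane) and `a`, `b`, `c` are extreme points of `conv S`. -/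
theorem triangle_face_of_convexHull
    (S : Set (EuclideanSpace ℝ (Fin 3))) (hS : S.Finite)
    (a b c : EuclideanSpace ℝ (Fin 3))
    (habc : AffineIndependent ℝ ![a, b, c])
    (haS : a ∈ S) (hbS : b ∈ S) (hcS : c ∈ S)
    (hside : ∀ p ∈ S, ∀ q ∈ S, p ∉ ({a, b, c} : Set (EuclideanSpace ℝ (Fin 3))) →
      q ∉ ({a, b, c} : Set (EuclideanSpace ℝ (Fin 3))) →
      (affineSpan ℝ ({a, b, c} : Set (EuclideanSpace ℝ (Fin 3)))).SSameSide p q) :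
    (∃ (w : EuclideanSpace ℝ (Fin 3) →ₗ[ℝ] ℝ) (c₀ : ℝ),
        w ≠ 0 ∧
        (∀ p ∈ convexHull ℝ S, w p ≤ c₀) ∧
        {p ∈ convexHull ℝ S | w p = c₀} =
          convexHull ℝ ({a, b, c} : Set (EuclideanSpace ℝ (Fin 3)))) ∧
      a ∈ Set.extremePoints ℝ (convexHull ℝ S) ∧
      b ∈ Set.extremePoints ℝ (convexHull ℝ S) ∧
      c ∈ Set.extremePoints ℝ (convexHull ℝ S) := by
  classical
  have hrange : Set.range ![a, b, c] = ({a, b, c} : Set (EuclideanSpace ℝ (Fin 3))) := by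
    ext x
    simp [Fin.exists_fin_succ, Fin.exists_fin_two]
    tauto
  have hfr : Module.finrank ℝ
      ((affineSpan ℝ ({a,b,c} : Set (EuclideanSpace ℝ (Fin 3)))).direction) = 2 := by
    rw [direction_affineSpan, ← hrange]
    exact habc.finrank_vectorSpan (by simp)
  set D := (affineSpan ℝ ({a,b,c} : Set (EuclideanSpace ℝ (Fin 3)))).direction with hDdef
  have hfrE : Module.finrank ℝ (EuclideanSpace ℝ (Fin 3)) = 3 := finrank_euclideanSpace_fin
  have hDp : Module.finrank ℝ Dᗮ = 1 := by
    have h := Submodule.finrank_add_finrank_orthogonal D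
    rw [hfr, hfrE] at h
    omega
  obtain ⟨n, hnD, hn0⟩ : ∃ n ∈ Dᗮ, n ≠ 0 := by
    rw [← Submodule.ne_bot_iff]
    intro h
    rw [h] at hDp
    simp at hDp
  have hDeq : D = (ℝ ∙ n)ᗮ := by
    apply Submodule.eq_of_le_of_finrank_eq
    · intro v hv
      rw [Submodule.mem_orthogonal_singleton_iff_inner_left]
      exact (Submodule.mem_orthogonal _ _).1 hnD v hv
    · rw [hfr]
      have h := Submodule.finrank_add_finrank_orthogonal (ℝ ∙ n)
      rw [finrank_span_singleton hn0, hfrE] at h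
      omega
  have haSp : a ∈ affineSpan ℝ ({a,b,c} : Set (EuclideanSpace ℝ (Fin 3))) :=
    mem_affineSpan ℝ (by simp)
  have hbSp : b ∈ affineSpan ℝ ({a,b,c} : Set (EuclideanSpace ℝ (Fin 3))) :=
    mem_affineSpan ℝ (by simp)
  have hcSp : c ∈ affineSpan ℝ ({a,b,c} : Set (EuclideanSpace ℝ (Fin 3))) :=
    mem_affineSpan ℝ (by simp)
  have hgiff : ∀ p : EuclideanSpace ℝ (Fin 3),
      p ∈ affineSpan ℝ ({a,b,c} : Set (EuclideanSpace ℝ (Fin 3))) ↔ ⟪n, p - a⟫ = 0 := by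
    intro p
    rw [← AffineSubspace.vsub_right_mem_direction_iff_mem haSp p, ← hDdef, hDeq,
      Submodule.mem_orthogonal_singleton_iff_inner_right, vsub_eq_sub]
  have hsign : ∀ p q : EuclideanSpace ℝ (Fin 3),
      (affineSpan ℝ ({a,b,c} : Set (EuclideanSpace ℝ (Fin 3)))).SSameSide p q →
      0 < ⟪n, p - a⟫ * ⟪n, q - a⟫ := by
    intro p q hpq
    obtain ⟨⟨p₁, hp₁, p₂, hp₂, hray⟩, hp, hq⟩ := hpq
    have e1 : ⟪n, p -ᵥ p₁⟫ = ⟪n, p - a⟫ := by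
      have h1 : (⟪n, p₁ - a⟫ : ℝ) = 0 := (hgiff p₁).1 hp₁
      rw [vsub_eq_sub]
      have : p - p₁ = (p - a) - (p₁ - a) := by abel
      rw [this, inner_sub_right, h1, sub_zero]
    have e2 : ⟪n, q -ᵥ p₂⟫ = ⟪n, q - a⟫ := by
      have h1 : (⟪n, p₂ - a⟫ : ℝ) = 0 := (hgiff p₂).1 hp₂
      rw [vsub_eq_sub]
      have : q - p₂ = (q - a) - (p₂ - a) := by abel
      rw [this, inner_sub_right, h1, sub_zero]
    have hgp : (⟪n, p - a⟫ : ℝ) ≠ 0 := fun h => hp ((hgiff p).2 h)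
    have hgq : (⟪n, q - a⟫ : ℝ) ≠ 0 := fun h => hq ((hgiff q).2 h)
    have hv1 : p -ᵥ p₁ ≠ 0 := by
      intro h
      rw [h, inner_zero_right] at e1
      exact hgp e1.symm
    have hv2 : q -ᵥ p₂ ≠ 0 := by
      intro h
      rw [h, inner_zero_right] at e2
      exact hgq e2.symm
    obtain ⟨r₁, r₂, hr₁, hr₂, hre⟩ := hray.exists_pos hv1 hv2
    have hinner : r₁ * ⟪n, p - a⟫ = r₂ * ⟪n, q - a⟫ := by
      rw [← e1, ← e2, ← real_inner_smul_right, ← real_inner_smul_right, hre]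
    have hgp_eq : (⟪n, p - a⟫ : ℝ) = r₂ * ⟪n, q - a⟫ / r₁ := by
      rw [eq_div_iff (ne_of_gt hr₁)]
      linarith [hinner]
    have h2 : (⟪n, p - a⟫ : ℝ) * ⟪n, q - a⟫ = (r₂/r₁) * (⟪n, q - a⟫ * ⟪n, q - a⟫) := by
      rw [hgp_eq]; ring
    rw [h2]
    exact mul_pos (div_pos hr₂ hr₁) (mul_self_pos.2 hgq)
  obtain ⟨m, hm0, hmb0, hmc0, hneg⟩ : ∃ m : EuclideanSpace ℝ (Fin 3), m ≠ 0 ∧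
      ⟪m, b - a⟫ = 0 ∧ ⟪m, c - a⟫ = 0 ∧
      ∀ p ∈ S, p ∉ ({a,b,c} : Set (EuclideanSpace ℝ (Fin 3))) → ⟪m, p - a⟫ < 0 := by
    have hgb : (⟪n, b - a⟫ : ℝ) = 0 := (hgiff b).1 hbSp
    have hgc : (⟪n, c - a⟫ : ℝ) = 0 := (hgiff c).1 hcSp
    by_cases hpos : ∃ p, p ∈ S ∧ p ∉ ({a,b,c} : Set (EuclideanSpace ℝ (Fin 3))) ∧
        0 < ⟪n, p - a⟫
    · obtain ⟨p₀, hp₀S, hp₀n, hp₀pos⟩ := hpos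
      refine ⟨-n, neg_ne_zero.2 hn0, by rw [inner_neg_left, hgb, neg_zero],
        by rw [inner_neg_left, hgc, neg_zero], ?_⟩
      intro p hpS hpn
      have hprod := hsign p p₀ (hside p hpS p₀ hp₀S hpn hp₀n)
      have hgp : 0 < ⟪n, p - a⟫ := by nlinarith
      rw [inner_neg_left]
      linarith
    · refine ⟨n, hn0, hgb, hgc, ?_⟩
      intro p hpS hpn
      have hps := (hside p hpS p hpS hpn hpn).2.1
      have hne : (⟪n, p - a⟫ : ℝ) ≠ 0 := fun h => hps ((hgiff p).2 h)
      push_neg at hpos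
      exact lt_of_le_of_ne (hpos p hpS hpn) hne
  set w : EuclideanSpace ℝ (Fin 3) →ₗ[ℝ] ℝ := innerₛₗ ℝ m with hwdef
  set c₀ : ℝ := ⟪m, a⟫ with hc₀def
  have hsub : ∀ x : EuclideanSpace ℝ (Fin 3), w x - c₀ = ⟪m, x - a⟫ := by
    intro x
    rw [hwdef, hc₀def]
    simp [inner_sub_right]
  have hwa : w a = c₀ := by have := hsub a; simp at this ⊢; linarith [this]
  have hwb : w b = c₀ := by have := hsub b; rw [hmb0] at this; linarith
  have hwc : w c = c₀ := by have := hsub c; rw [hmc0] at this; linarith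
  have hwltS : ∀ x ∈ S, x ∉ ({a,b,c} : Set (EuclideanSpace ℝ (Fin 3))) → w x < c₀ := by
    intro x hxS hx
    have := hneg x hxS hx
    rw [← hsub x] at this
    linarith
  have hwS : ∀ x ∈ S, w x ≤ c₀ := by
    intro x hxS
    by_cases hx : x ∈ ({a,b,c} : Set (EuclideanSpace ℝ (Fin 3)))
    · rcases hx with rfl | rfl | rfl
      · exact le_of_eq hwa
      · exact le_of_eq hwb
      · exact le_of_eq hwc
    · exact le_of_lt (hwltS x hxS hx)
  have hhull : ∀ p ∈ convexHull ℝ S, w p ≤ c₀ :=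
    fun p hp => convexHull_min hwS (convex_halfSpace_le (LinearMap.isLinear w) c₀) hp
  have habcS : ({a,b,c} : Set (EuclideanSpace ℝ (Fin 3))) ⊆ S := by
    rintro x (rfl | rfl | rfl) <;> assumption
  have hface : {p ∈ convexHull ℝ S | w p = c₀} =
      convexHull ℝ ({a,b,c} : Set (EuclideanSpace ℝ (Fin 3))) := by
    apply Subset.antisymm
    · rintro p ⟨hp1, hp2⟩
      refine convexHull_mono ?_ (key_hull_lemma S w c₀ hwS hp1 hp2)
      rintro x ⟨hxS, hxw⟩
      by_contra hx
      exact absurd hxw (ne_of_lt (hwltS x hxS hx))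
    · intro p hp
      refine ⟨convexHull_mono habcS hp, ?_⟩
      have hsub2 : convexHull ℝ ({a,b,c} : Set (EuclideanSpace ℝ (Fin 3))) ⊆
          {x | w x = c₀} := by
        apply convexHull_min
        · rintro x (rfl | rfl | rfl)
          exacts [hwa, hwb, hwc]
        · exact convex_hyperplane (LinearMap.isLinear w) c₀
      exact hsub2 hp
  have hw0 : w ≠ 0 := by
    intro h
    have hm : w m = 0 := by rw [h]; rfl
    rw [hwdef] at hm
    simp only [innerₛₗ_apply_apply] at hm
    exact hm0 (inner_self_eq_zero.1 hm)
  have hmain : ∀ x, x ∈ S → w x = c₀ →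
      x ∉ affineSpan ℝ (({a,b,c} : Set (EuclideanSpace ℝ (Fin 3))) \ {x}) →
      x ∈ (convexHull ℝ S).extremePoints ℝ := by
    intro x hxS hwx hxsp
    refine extremePoint_of_not_mem_hull_diff hxS ?_
    intro hcon
    have h1 := key_hull_lemma (S \ {x}) w c₀ (fun y hy => hwS y hy.1) hcon hwx
    refine hxsp (convexHull_subset_affineSpan _ (convexHull_mono ?_ h1))
    rintro y ⟨⟨hyS, hyx⟩, hyw⟩
    have hy3 : y ∈ ({a,b,c} : Set (EuclideanSpace ℝ (Fin 3))) := by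
      by_contra hy
      exact absurd hyw (ne_of_lt (hwltS y hyS hy))
    exact ⟨hy3, hyx⟩
  have hdiffspan : ∀ (i : Fin 3),
      (({a,b,c} : Set (EuclideanSpace ℝ (Fin 3))) \ {![a,b,c] i}) ⊆
        ![a,b,c] '' (Set.univ \ {i}) := by
    intro i y ⟨hy, hy'⟩
    rcases hy with rfl | rfl | rfl
    · refine ⟨0, ⟨mem_univ _, ?_⟩, by simp⟩
      intro h0
      rw [mem_singleton_iff] at h0
      apply hy'
      rw [← h0]
      simp
    · refine ⟨1, ⟨mem_univ _, ?_⟩, by simp⟩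
      intro h0
      rw [mem_singleton_iff] at h0
      apply hy'
      rw [← h0]
      simp
    · refine ⟨2, ⟨mem_univ _, ?_⟩, by simp⟩
      intro h0
      rw [mem_singleton_iff] at h0
      apply hy'
      rw [← h0]
      simp
  have hnspan : ∀ (i : Fin 3),
      ![a,b,c] i ∉ affineSpan ℝ (({a,b,c} : Set (EuclideanSpace ℝ (Fin 3))) \ {![a,b,c] i}) := by
    intro i hmem
    exact habc.notMem_affineSpan_diff i Set.univ
      (affineSpan_mono ℝ (hdiffspan i) hmem)
  have hna := hnspan 0
  have hnb := hnspan 1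
  have hnc := hnspan 2
  simp only [Matrix.cons_val_zero, Matrix.cons_val_one, Matrix.head_cons,
    Matrix.cons_val_two, Matrix.tail_cons] at hna hnb hnc
  exact ⟨⟨w, c₀, hw0, hhull, hface⟩, hmain a haS hwa hna, hmain b hbS hwb hnb,
    hmain c hcS hwc hnc⟩
end
end
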